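/- arXiv:2303.11663 — 2 statements merged into one kernel-verified Lean document; each statement's English description precedes it below -/
import Mathlib

section
/- Let s ∈ (0,1), m > ω > 0, Ω ∈ (0, m^2 - ω^2], and suppose the real number α satisfies α > -α_0(s,Ω) where α_0(s,t) = s^{-s}(1-s)^{s-1} t^{1-s}. Then there exists ε_0 > 0 such that both c_1 := 1 - α^- s ε_0 > 0 and c_2 := m^2 - ω^2 - α^- (1-s) ε_0^{-s/(1-s)} > 0, where α^- = max(-α, 0). -/
open Real

lemma rpow_merge {x : ℝ} (hx : 0 < x) (a b : ℝ) : x ^ a * x ^ b = x ^ (a + b) :=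
  (Real.rpow_add hx a b).symm

/-- Key algebraic solvability lemma: if `s ∈ (0,1)`, `m > ω > 0`,
`Ω ∈ (0, m² - ω²]`, and `α > -α₀(s,Ω)` where `α₀(s,t) = s^(-s) (1-s)^(s-1) t^(1-s)`,
then there is `ε₀ > 0` with `c₁ = 1 - α⁻ s ε₀ > 0` and
`c₂ = m² - ω² - α⁻ (1-s) ε₀^(-s/(1-s)) > 0`, where `α⁻ = max(-α,0)`. -/
theorem stmt_7 (s m ω Ω α : ℝ) (hs : s ∈ Set.Ioo (0:ℝ) 1) (hω : 0 < ω) (hm : ω < m)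
    (hΩ : Ω ∈ Set.Ioc (0:ℝ) (m ^ 2 - ω ^ 2))
    (hα : -(s ^ (-s) * (1 - s) ^ (s - 1) * Ω ^ (1 - s)) < α) :
    ∃ ε₀ : ℝ, 0 < ε₀ ∧ 0 < 1 - max (-α) 0 * s * ε₀ ∧
      0 < m ^ 2 - ω ^ 2 - max (-α) 0 * (1 - s) * ε₀ ^ (-(s / (1 - s))) := by
  obtain ⟨hs0, hs1⟩ := hs
  obtain ⟨hΩ0, hΩT⟩ := hΩ
  set T : ℝ := m ^ 2 - ω ^ 2 with hTdef
  have hT : 0 < T := lt_of_lt_of_le hΩ0 hΩT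
  have hs1' : 0 < 1 - s := by linarith
  set P : ℝ := s ^ (-s) * (1 - s) ^ (s - 1) * T ^ (1 - s) with hPdef
  have hP : 0 < P := by positivity
  -- monotonicity: α₀(s,Ω) ≤ α₀(s,T)
  have hmono : s ^ (-s) * (1 - s) ^ (s - 1) * Ω ^ (1 - s) ≤ P := by
    have : Ω ^ (1 - s) ≤ T ^ (1 - s) :=
      Real.rpow_le_rpow (le_of_lt hΩ0) hΩT (le_of_lt hs1')
    have h1 : (0:ℝ) < s ^ (-s) * (1 - s) ^ (s - 1) := by positivity
    exact mul_le_mul_of_nonneg_left this (le_of_lt h1)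
  have hA : max (-α) 0 < P := by
    rcases max_cases (-α) 0 with ⟨h, _⟩ | ⟨h, _⟩
    · rw [h]; linarith
    · rw [h]; exact hP
  set ε₀ : ℝ := s ^ (s - 1) * (1 - s) ^ (1 - s) * T ^ (s - 1) with hεdef
  have hε : 0 < ε₀ := by positivity
  refine ⟨ε₀, hε, ?_, ?_⟩
  · -- s * ε₀ * P = 1
    have key : s * ε₀ * P = 1 := by
      have hs' : s = s ^ (1:ℝ) := (Real.rpow_one s).symm
      rw [hεdef, hPdef]
      nth_rewrite 1 [hs']
      rw [show s ^ (1:ℝ) * (s ^ (s - 1) * (1 - s) ^ (1 - s) * T ^ (s - 1)) *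
            (s ^ (-s) * (1 - s) ^ (s - 1) * T ^ (1 - s)) =
          (s ^ (1:ℝ) * s ^ (s - 1) * s ^ (-s)) *
            ((1 - s) ^ (1 - s) * (1 - s) ^ (s - 1)) * (T ^ (s - 1) * T ^ (1 - s)) by ring]
      rw [rpow_merge hs0, rpow_merge hs0, rpow_merge hs1', rpow_merge hT]
      norm_num
    have : max (-α) 0 * s * ε₀ < P * s * ε₀ := by
      have hpos : 0 < s * ε₀ := by positivity
      have := mul_lt_mul_of_pos_right hA hpos
      calc max (-α) 0 * s * ε₀ = max (-α) 0 * (s * ε₀) := by ring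
        _ < P * (s * ε₀) := this
        _ = P * s * ε₀ := by ring
    have : max (-α) 0 * s * ε₀ < 1 := by
      calc max (-α) 0 * s * ε₀ < P * s * ε₀ := this
        _ = s * ε₀ * P := by ring
        _ = 1 := key
    linarith
  · -- ε₀ ^ (-(s/(1-s))) = s^s * (1-s)^(-s) * T^s
    have hεpow : ε₀ ^ (-(s / (1 - s))) = s ^ s * (1 - s) ^ (-s) * T ^ s := by
      rw [hεdef]
      rw [Real.mul_rpow (by positivity) (by positivity),
          Real.mul_rpow (by positivity) (by positivity),
          ← Real.rpow_mul (le_of_lt hs0),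
          ← Real.rpow_mul (le_of_lt hs1'), ← Real.rpow_mul (le_of_lt hT)]
      rw [show (s - 1) * -(s / (1 - s)) = s by field_simp; ring,
          show (1 - s) * -(s / (1 - s)) = -s by field_simp]
    have key : (1 - s) * (s ^ s * (1 - s) ^ (-s) * T ^ s) * P = T := by
      have h1s' : (1 - s) = (1 - s) ^ (1:ℝ) := (Real.rpow_one _).symm
      have hT' : T = T ^ (1:ℝ) := (Real.rpow_one _).symm
      rw [hPdef]
      nth_rewrite 1 [h1s']
      rw [show (1 - s) ^ (1:ℝ) * (s ^ s * (1 - s) ^ (-s) * T ^ s) *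
            (s ^ (-s) * (1 - s) ^ (s - 1) * T ^ (1 - s)) =
          (s ^ s * s ^ (-s)) *
            ((1 - s) ^ (1:ℝ) * (1 - s) ^ (-s) * (1 - s) ^ (s - 1)) *
            (T ^ s * T ^ (1 - s)) by ring]
      rw [rpow_merge hs0, rpow_merge hs1', rpow_merge hs1', rpow_merge hT,
          show (1:ℝ) + -s + (s - 1) = 0 by ring, show s + (1 - s) = (1:ℝ) by ring]
      norm_num
    have hbig : max (-α) 0 * (1 - s) * ε₀ ^ (-(s / (1 - s))) < T := by
      have hpos : 0 < (1 - s) * (s ^ s * (1 - s) ^ (-s) * T ^ s) := by positivity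
      calc max (-α) 0 * (1 - s) * ε₀ ^ (-(s / (1 - s)))
          = max (-α) 0 * ((1 - s) * (s ^ s * (1 - s) ^ (-s) * T ^ s)) := by
            rw [hεpow]; ring
        _ < P * ((1 - s) * (s ^ s * (1 - s) ^ (-s) * T ^ s)) :=
            mul_lt_mul_of_pos_right hA hpos
        _ = (1 - s) * (s ^ s * (1 - s) ^ (-s) * T ^ s) * P := by ring
        _ = T := key
    linarith
end

section
/- Let s ∈ (0,1), α ∈ R, p ∈ [4,6), m > ω > 0, and suppose α^- < α_0(s, m^2-ω^2) = s^{-s}(1-s)^{s-1}(m^2-ω^2)^{1-s}. Let c_1, c_2 > 0 be constants with 1 - α^- s ε_0 = c_1 and m^2 - ω^2 - α^-(1-s)ε_0^{-s/(1-s)} = c_2 for a suitable ε_0 > 0. Then for every u ∈ H^1(R^3) and every measurable φ with 0 ≤ φ ≤ ω on {u ≠ 0}, the quantity p·J - J' u with J = (1/2)B_α(u,u) + ((m^2-ω^2)/2)‖u‖_2^2 + (ω/2)∫φu^2 - (1/p)‖u‖_p^p and J'u = B_α(u,u) + (m^2-ω^2)‖u‖_2^2 + 2ω∫φu^2 - ∫φ^2u^2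 - ‖u‖_p^p satisfies pJ - J'u ≥ (p/2 - 1) min{c_1,c_2} ‖u‖_{H^1}^2. -/
open MeasureTheory Real

noncomputable abbrev E3 := EuclideanSpace ℝ (Fin 3)

set_option maxHeartbeats 1000000 in
/-- Let `s ∈ (0,1)`, `α ∈ ℝ`, `p ∈ [4,6)`, `m > ω > 0`, with
`α⁻ < α₀(s, m²-ω²) = s^(-s) (1-s)^(s-1) (m²-ω²)^(1-s)`, and let `c₁, c₂ > 0` with
`c₁ = 1 - α⁻ s ε₀` and `c₂ = m² - ω² - α⁻ (1-s) ε₀^(-s/(1-s))` for a suitable `ε₀ > 0`.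
Then for every `u ∈ H¹(ℝ³)` and every measurable `φ` with `φ ≥ 0` and `φ ≤ ω` on
`{u ≠ 0}`, the quantity `p·J - J'u`, with
`J = (1/2)B_α(u,u) + ((m²-ω²)/2)‖u‖₂² + (ω/2)∫φu² - (1/p)‖u‖ₚᵖ` and
`J'u = B_α(u,u) + (m²-ω²)‖u‖₂² + 2ω∫φu² - ∫φ²u² - ‖u‖ₚᵖ`, satisfies
`p·J - J'u ≥ (p/2 - 1) min{c₁,c₂} ‖u‖_{H¹}²`.
Here `B_α(u,u) = ‖∇u‖₂² + α ∫ |ξ|^(2s) |F(ξ)|² dξ` with `F = 𝓕u` encoded through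
the Plancherel identities, and `g = ∇u`. -/
theorem stmt_17 (s α p m ω ε₀ c₁ c₂ : ℝ) (hs : s ∈ Set.Ioo (0:ℝ) 1)
    (hp : p ∈ Set.Ico (4:ℝ) 6) (hω : 0 < ω) (hm : ω < m)
    (hα : max (-α) 0 < s ^ (-s) * (1 - s) ^ (s - 1) * (m ^ 2 - ω ^ 2) ^ (1 - s))
    (hε₀ : 0 < ε₀)
    (hc₁ : c₁ = 1 - max (-α) 0 * s * ε₀) (hc₁pos : 0 < c₁)
    (hc₂ : c₂ = m ^ 2 - ω ^ 2 - max (-α) 0 * (1 - s) * ε₀ ^ (-(s / (1 - s))))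
    (hc₂pos : 0 < c₂)
    (u : E3 → ℝ) (g : E3 → E3) (F : E3 → ℂ) (φ : E3 → ℝ)
    (hu2 : MemLp u 2) (hg2 : MemLp g 2)
    (hderiv : ∀ x, HasGradientAt u (g x) x)
    (hF : AEStronglyMeasurable F volume)
    (hFint0 : Integrable (fun ξ => ‖F ξ‖ ^ 2))
    (hFint1 : Integrable (fun ξ => ‖ξ‖ ^ 2 * ‖F ξ‖ ^ 2))
    (hPl0 : (∫ ξ, ‖F ξ‖ ^ 2) = ∫ x, (u x) ^ 2)
    (hPl1 : (∫ ξ, ‖ξ‖ ^ 2 * ‖F ξ‖ ^ 2) = ∫ x, ‖g x‖ ^ 2)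
    (hφmeas : Measurable φ) (hφpos : ∀ x, 0 ≤ φ x)
    (hφω : ∀ x, u x ≠ 0 → φ x ≤ ω)
    (hφu : Integrable (fun x => φ x * (u x) ^ 2))
    (hφ2u : Integrable (fun x => (φ x) ^ 2 * (u x) ^ 2))
    (hup : Integrable (fun x => |u x| ^ p)) :
    p * ((1 / 2) * ((∫ x, ‖g x‖ ^ 2) + α * ∫ ξ, ‖ξ‖ ^ (2 * s) * ‖F ξ‖ ^ 2)
          + (m ^ 2 - ω ^ 2) / 2 * (∫ x, (u x) ^ 2)
          + (ω / 2) * (∫ x, φ x * (u x) ^ 2) - (1 / p) * ∫ x, |u x| ^ p)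
      - (((∫ x, ‖g x‖ ^ 2) + α * ∫ ξ, ‖ξ‖ ^ (2 * s) * ‖F ξ‖ ^ 2)
          + (m ^ 2 - ω ^ 2) * (∫ x, (u x) ^ 2)
          + 2 * ω * (∫ x, φ x * (u x) ^ 2) - (∫ x, (φ x) ^ 2 * (u x) ^ 2)
          - ∫ x, |u x| ^ p)
      ≥ (p / 2 - 1) * min c₁ c₂ * ((∫ x, (u x) ^ 2) + ∫ x, ‖g x‖ ^ 2) := by

  obtain ⟨hs0, hs1⟩ := hs
  obtain ⟨hp4, hp6⟩ := hp
  set β := max (-α) 0 with hβ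
  have hβ0 : (0:ℝ) ≤ β := le_max_right _ _
  have hαβ : -β ≤ α := neg_le.mp (le_max_left _ _)
  set ε' : ℝ := ε₀ ^ (-(s / (1 - s))) with hε'
  have hε'pos : 0 < ε' := Real.rpow_pos_of_pos hε₀ _
  set S := ∫ ξ, ‖ξ‖ ^ (2 * s) * ‖F ξ‖ ^ 2 with hS
  set A := ∫ x, ‖g x‖ ^ 2 with hA
  set U := ∫ x, (u x) ^ 2 with hU
  set Φ := ∫ x, φ x * (u x) ^ 2 with hΦ
  set Φ2 := ∫ x, (φ x) ^ 2 * (u x) ^ 2 with hΦ2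
  set P := ∫ x, |u x| ^ p with hP
  have hU0 : 0 ≤ U := integral_nonneg fun x => sq_nonneg _
  have hA0 : 0 ≤ A := integral_nonneg fun x => sq_nonneg _
  have hΦ0 : 0 ≤ Φ := integral_nonneg fun x => mul_nonneg (hφpos x) (sq_nonneg _)
  have hΦ20 : 0 ≤ Φ2 := integral_nonneg fun x => mul_nonneg (sq_nonneg _) (sq_nonneg _)
  have hS0 : 0 ≤ S := integral_nonneg fun ξ =>
    mul_nonneg (Real.rpow_nonneg (norm_nonneg _) _) (sq_nonneg _)
  -- pointwise Young inequality
  have hpoint : ∀ ξ : E3, ‖ξ‖ ^ (2 * s) ≤ s * ε₀ * ‖ξ‖ ^ 2 + (1 - s) * ε' := by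
    intro ξ
    have h1s : (0:ℝ) < 1 - s := by linarith
    have ht0 : (0:ℝ) ≤ ‖ξ‖ ^ 2 := sq_nonneg _
    have hg := Real.geom_mean_le_arith_mean2_weighted hs0.le h1s.le
      (mul_nonneg hε₀.le ht0) hε'pos.le (by ring)
    have h1 : (ε₀ * ‖ξ‖ ^ 2) ^ s = ε₀ ^ s * (‖ξ‖ ^ 2) ^ s := Real.mul_rpow hε₀.le ht0
    have h2 : ((‖ξ‖ : ℝ) ^ 2) ^ s = ‖ξ‖ ^ (2 * s) := by
      rw [← Real.rpow_natCast ‖ξ‖ 2, ← Real.rpow_mul (norm_nonneg ξ)]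
      norm_num
    have h3 : ε' ^ (1 - s) = ε₀ ^ (-s) := by
      rw [hε', ← Real.rpow_mul hε₀.le]
      congr 1
      field_simp
    have h4 : ε₀ ^ s * ε₀ ^ (-s) = 1 := by
      rw [← Real.rpow_add hε₀]; simp
    have heq : (ε₀ * ‖ξ‖ ^ 2) ^ s * ε' ^ (1 - s) = ‖ξ‖ ^ (2 * s) := by
      calc (ε₀ * ‖ξ‖ ^ 2) ^ s * ε' ^ (1 - s)
          = ε₀ ^ s * ε₀ ^ (-s) * ‖ξ‖ ^ (2 * s) := by rw [h1, h2, h3]; ring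
        _ = ‖ξ‖ ^ (2 * s) := by rw [h4, one_mul]
    rw [heq] at hg
    calc ‖ξ‖ ^ (2 * s) ≤ s * (ε₀ * ‖ξ‖ ^ 2) + (1 - s) * ε' := hg
      _ = s * ε₀ * ‖ξ‖ ^ 2 + (1 - s) * ε' := by ring
  -- integral bound on S
  have hSle : S ≤ s * ε₀ * A + (1 - s) * ε' * U := by
    have hint : Integrable (fun ξ : E3 => s * ε₀ * (‖ξ‖ ^ 2 * ‖F ξ‖ ^ 2)
        + (1 - s) * ε' * ‖F ξ‖ ^ 2) :=
      (hFint1.const_mul _).add (hFint0.const_mul _)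
    have hmono : S ≤ ∫ ξ, (s * ε₀ * (‖ξ‖ ^ 2 * ‖F ξ‖ ^ 2) + (1 - s) * ε' * ‖F ξ‖ ^ 2) := by
      refine integral_mono_of_nonneg (Filter.Eventually.of_forall fun ξ =>
        mul_nonneg (Real.rpow_nonneg (norm_nonneg _) _) (sq_nonneg _)) hint
        (Filter.Eventually.of_forall fun ξ => ?_)
      have := mul_le_mul_of_nonneg_right (hpoint ξ) (sq_nonneg (‖F ξ‖))
      simp only []
      nlinarith [this]
    rw [integral_add (hFint1.const_mul _) (hFint0.const_mul _),
      integral_const_mul, integral_const_mul, hPl0, hPl1] at hmono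
    exact hmono
  clear_value S A U Φ Φ2 P
  have hkey : c₁ * A + c₂ * U ≤ A + α * S + (m ^ 2 - ω ^ 2) * U := by
    have h1 : -β * S ≤ α * S := mul_le_mul_of_nonneg_right hαβ hS0
    have h2 : β * S ≤ β * (s * ε₀ * A + (1 - s) * ε' * U) :=
      mul_le_mul_of_nonneg_left hSle hβ0
    rw [hc₁, hc₂]
    nlinarith
  set M := min c₁ c₂ with hM
  have hMc : M * (A + U) ≤ c₁ * A + c₂ * U := by
    have h1 : M ≤ c₁ := min_le_left _ _
    have h2 : M ≤ c₂ := min_le_right _ _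
    nlinarith
  have hkey2 : M * (A + U) ≤ A + α * S + (m ^ 2 - ω ^ 2) * U := le_trans hMc hkey
  have hfac : (p / 2 - 1) * (M * (A + U)) ≤
      (p / 2 - 1) * (A + α * S + (m ^ 2 - ω ^ 2) * U) :=
    mul_le_mul_of_nonneg_left hkey2 (by linarith)
  have hp0 : p ≠ 0 := by linarith
  have hΦterm : 0 ≤ ω * (p / 2 - 2) * Φ :=
    mul_nonneg (mul_nonneg hω.le (by linarith)) hΦ0
  have hexp : p * ((1 / 2) * (A + α * S) + (m ^ 2 - ω ^ 2) / 2 * U + (ω / 2) * Φ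
        - (1 / p) * P) - ((A + α * S) + (m ^ 2 - ω ^ 2) * U + 2 * ω * Φ - Φ2 - P)
      = (p / 2 - 1) * (A + α * S + (m ^ 2 - ω ^ 2) * U) + ω * (p / 2 - 2) * Φ + Φ2 := by
    have hip : p * (1 / p) = 1 := mul_one_div_cancel hp0
    linear_combination (-P) * hip
  have hgoal2 : (p / 2 - 1) * M * (U + A)
      ≤ (p / 2 - 1) * (A + α * S + (m ^ 2 - ω ^ 2) * U) := by
    calc (p / 2 - 1) * M * (U + A) = (p / 2 - 1) * (M * (A + U)) := by ring
      _ ≤ _ := hfac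
  rw [ge_iff_le, hexp]
  linarith [hgoal2, hΦterm, hΦ20]
end
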